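/- For all integers k ≥ 1 and n ≥ 4, there exists a positive integer N such that every k-crossing system of paths of size at least N contains a regular subsystem of size n. -/

import Mathlib

noncomputable section

/-- A function `g` changes sign at `t`. -/
def SignChangeAt (g : ℝ → ℝ) (t : ℝ) : Prop :=
  ∃ ε > (0 : ℝ),
    ((∀ s ∈ Set.Ioo (t - ε) t, g s < 0) ∧ (∀ s ∈ Set.Ioo t (t + ε), 0 < g s)) ∨
    ((∀ s ∈ Set.Ioo (t - ε) t, 0 < g s) ∧ (∀ s ∈ Set.Ioo t (t + ε), g s < 0))

/-- A system of at least three paths (graphs of continuous functions on `[0,1]`):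
distinct endpoints, finite pairwise intersections, all of which are crossings,
and no triple intersection points. -/
structure PathSystem (m : ℕ) where
  f : Fin m → ℝ → ℝ
  size_ge : 3 ≤ m
  cont : ∀ i, ContinuousOn (f i) (Set.Icc 0 1)
  endpoints0 : ∀ i j : Fin m, i ≠ j → f i 0 ≠ f j 0
  endpoints1 : ∀ i j : Fin m, i ≠ j → f i 1 ≠ f j 1
  finite_meet : ∀ i j : Fin m, i ≠ j → {t : ℝ | t ∈ Set.Icc (0:ℝ) 1 ∧ f i t = f j t}.Finite
  crossing : ∀ i j : Fin m, i ≠ j → ∀ t ∈ Set.Icc (0:ℝ) 1, f i t = f j t →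
      SignChangeAt (fun s => f i s - f j s) t
  no_triple : ∀ i j k : Fin m, i ≠ j → i ≠ k → j ≠ k → ∀ t ∈ Set.Icc (0:ℝ) 1,
      ¬(f i t = f j t ∧ f i t = f k t)

/-- The set of parameters where paths `i` and `j` of the system meet (= cross). -/
def meetSet {m : ℕ} (S : PathSystem m) (i j : Fin m) : Set ℝ :=
  {t : ℝ | t ∈ Set.Icc (0:ℝ) 1 ∧ S.f i t = S.f j t}

/-- Each pair of paths crosses at least once and at most `k` times. -/
def KCrossing {m : ℕ} (S : PathSystem m) (k : ℕ) : Prop :=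
  ∀ i j : Fin m, i ≠ j → 1 ≤ (meetSet S i j).ncard ∧ (meetSet S i j).ncard ≤ k

/-- Path `i` appears on the upper envelope of the system. -/
def OnUpperEnv {m : ℕ} (S : PathSystem m) (i : Fin m) : Prop :=
  ∃ t ∈ Set.Icc (0:ℝ) 1, ∀ j : Fin m, j ≠ i → S.f j t < S.f i t

/-- Path `i` appears on the lower envelope of the system. -/
def OnLowerEnv {m : ℕ} (S : PathSystem m) (i : Fin m) : Prop :=
  ∃ t ∈ Set.Icc (0:ℝ) 1, ∀ j : Fin m, j ≠ i → S.f i t < S.f j t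

/-- The subsystem of `S` on the index set `s` is upper convex. -/
def UpperConvexOn {m : ℕ} (S : PathSystem m) (s : Finset (Fin m)) : Prop :=
  ∀ i ∈ s, ∃ t ∈ Set.Icc (0:ℝ) 1, ∀ j ∈ s, j ≠ i → S.f j t < S.f i t

/-- The subsystem of `S` on the index set `s` is lower convex. -/
def LowerConvexOn {m : ℕ} (S : PathSystem m) (s : Finset (Fin m)) : Prop :=
  ∀ i ∈ s, ∃ t ∈ Set.Icc (0:ℝ) 1, ∀ j ∈ s, j ≠ i → S.f i t < S.f j t

/-- The three-letter ordered alphabet `x ≺ y ≺ z` used for signatures. -/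
inductive XYZ : Type
  | x | y | z
deriving DecidableEq

/-- The signature of the size-3 subsystem on paths `i, j, k`, where the labels are
ordered by the values at `0` (bottom to top): the word on `{x,y,z}` listing the
crossings from left to right, `x` for an `{i,j}`-crossing, `y` for an `{i,k}`-crossing
and `z` for a `{j,k}`-crossing. -/
noncomputable def signature3 {m : ℕ} (S : PathSystem m) (i j k : Fin m)
    (h1 : S.f i 0 < S.f j 0) (h2 : S.f j 0 < S.f k 0) : List XYZ :=
  (Finset.sort
      (((S.finite_meet i j (by intro h; subst h; exact lt_irrefl _ h1)).toFinset ∪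
        (S.finite_meet i k (by intro h; subst h; exact lt_irrefl _ (h1.trans h2))).toFinset) ∪
        (S.finite_meet j k (by intro h; subst h; exact lt_irrefl _ h2)).toFinset) (· ≤ ·)).map
    (fun t => if S.f i t = S.f j t then XYZ.x else if S.f i t = S.f k t then XYZ.y else XYZ.z)

/-- `σ` is the common (nonempty) signature of all size-3 subsystems of `S`. -/
def RegularSig {m : ℕ} (S : PathSystem m) (σ : List XYZ) : Prop :=
  σ ≠ [] ∧ ∀ (i j k : Fin m) (h1 : S.f i 0 < S.f j 0) (h2 : S.f j 0 < S.f k 0),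
    signature3 S i j k h1 h2 = σ

/-- A regular system: size at least 4, and all size-3 subsystems have the same
nonempty signature. -/
def IsRegularSystem {m : ℕ} (S : PathSystem m) : Prop :=
  4 ≤ m ∧ ∃ σ : List XYZ, RegularSig S σ

/-- A system labeled by `[m]`: indices increase with the order of the left endpoints. -/
structure LabeledPathSystem (m : ℕ) extends PathSystem m where
  mono0 : ∀ i j : Fin m, i < j → f i 0 < f j 0

/-- Signature of the size-3 subsystem on `i < j < k` of a labeled system. -/
noncomputable def lsig {m : ℕ} (S : LabeledPathSystem m) (i j k : Fin m)
    (h1 : i < j) (h2 : j < k) : List XYZ :=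
  signature3 S.toPathSystem i j k (S.mono0 i j h1) (S.mono0 j k h2)

/-- `σ` is the common nonempty signature of all size-3 subsystems of the labeled
system `S`. -/
def SystemSignatureL {m : ℕ} (S : LabeledPathSystem m) (σ : List XYZ) : Prop :=
  σ ≠ [] ∧ ∀ (i j k : Fin m) (h1 : i < j) (h2 : j < k), lsig S i j k h1 h2 = σ

/-- The signature of a labeled system of three paths. -/
noncomputable def sig3 (S : LabeledPathSystem 3) : List XYZ :=
  lsig S 0 1 2 (by decide) (by decide)

/-- The set of parameters where path `i` meets some other path. -/
def crossTimes {m : ℕ} (S : PathSystem m) (i : Fin m) : Set ℝ :=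
  {t : ℝ | t ∈ Set.Icc (0:ℝ) 1 ∧ ∃ j : Fin m, j ≠ i ∧ S.f j t = S.f i t}

lemma crossTimes_finite {m : ℕ} (S : PathSystem m) (i : Fin m) :
    (crossTimes S i).Finite := by
  have hsub : crossTimes S i ⊆
      ⋃ j : Fin m, {t : ℝ | (t ∈ Set.Icc (0:ℝ) 1 ∧ S.f j t = S.f i t) ∧ j ≠ i} := by
    rintro t ⟨ht, j, hj, he⟩
    exact Set.mem_iUnion.2 ⟨j, ⟨ht, he⟩, hj⟩
  refine Set.Finite.subset (Set.finite_iUnion fun j => ?_) hsub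
  by_cases hj : j = i
  · subst hj
    have h0 : {t : ℝ | (t ∈ Set.Icc (0:ℝ) 1 ∧ S.f j t = S.f j t) ∧ j ≠ j} = ∅ := by
      ext t; simp
    rw [h0]; exact Set.finite_empty
  · exact (S.finite_meet j i hj).subset fun t ht => ht.1

/-- The local sequence of path `i`: the labels of the other paths in the order in
which path `i` meets them from left to right. -/
noncomputable def localSeq {m : ℕ} (S : PathSystem m) (i : Fin m) : List (Fin m) :=
  (Finset.sort (crossTimes_finite S i).toFinset (· ≤ ·)).map fun t =>
    if h : ∃ j : Fin m, j ≠ i ∧ S.f j t = S.f i t then h.choose else i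

/-- The tableau associated to a labeled system: row `r` (for `1 ≤ r ≤ m`) is the
local sequence of path `r` written with the (1-based) labels. -/
noncomputable def assocTab {m : ℕ} (S : LabeledPathSystem m) : ℕ → List ℕ :=
  fun r => if h : 1 ≤ r ∧ r ≤ m then
      (localSeq S.toPathSystem ⟨r - 1, by omega⟩).map (fun j => (j : ℕ) + 1)
    else []

/-- A nonempty word on `{x,y,z}` is irreducible if no nonempty proper prefix contains
equally many `x`'s, `y`'s and `z`'s. -/
def IrreducibleXYZ (σ : List XYZ) : Prop :=
  σ ≠ [] ∧ ∀ p : ℕ, 0 < p → p < σ.length →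
    ¬((σ.take p).count XYZ.x = (σ.take p).count XYZ.y ∧
      (σ.take p).count XYZ.y = (σ.take p).count XYZ.z)



section Ramsey


variable {α β : Type*} [LinearOrder α] [DecidableEq β]

lemma pair_sublist {l : List α} (hl : l.Pairwise (· < ·)) {x y : α}
    (hx : x ∈ l) (hy : y ∈ l) (hxy : x < y) : List.Sublist [x, y] l := by
  induction l with
  | nil => simp at hx
  | cons a tl ih =>
    rcases List.pairwise_cons.1 hl with ⟨ha, htl⟩
    rcases List.mem_cons.1 hx with rfl | hx'
    · have hy' : y ∈ tl := by
        rcases List.mem_cons.1 hy with rfl | h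
        · exact absurd hxy (lt_irrefl _)
        · exact h
      exact (List.singleton_sublist.2 hy').cons₂ x
    · have hax : a < x := ha x hx'
      have hy' : y ∈ tl := by
        rcases List.mem_cons.1 hy with rfl | h
        · exact absurd (hax.trans hxy) (lt_irrefl _)
        · exact h
      exact (ih htl hx' hy').cons a

lemma triple_sublist {l : List α} (hl : l.Pairwise (· < ·)) {x y z : α}
    (hx : x ∈ l) (hy : y ∈ l) (hz : z ∈ l) (hxy : x < y) (hyz : y < z) :
    List.Sublist [x, y, z] l := by
  induction l with
  | nil => simp at hx
  | cons a tl ih =>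
    rcases List.pairwise_cons.1 hl with ⟨ha, htl⟩
    rcases List.mem_cons.1 hx with rfl | hx'
    · have hy' : y ∈ tl := by
        rcases List.mem_cons.1 hy with rfl | h
        · exact absurd hxy (lt_irrefl _)
        · exact h
      have hz' : z ∈ tl := by
        rcases List.mem_cons.1 hz with rfl | h
        · exact absurd (hxy.trans hyz) (lt_irrefl _)
        · exact h
      exact (pair_sublist htl hy' hz' hyz).cons₂ x
    · have hax : a < x := ha x hx'
      have hy' : y ∈ tl := by
        rcases List.mem_cons.1 hy with rfl | h
        · exact absurd (hax.trans hxy) (lt_irrefl _)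
        · exact h
      have hz' : z ∈ tl := by
        rcases List.mem_cons.1 hz with rfl | h
        · exact absurd ((hax.trans hxy).trans hyz) (lt_irrefl _)
        · exact h
      exact (ih htl hx' hy' hz').cons a

lemma seq2 (C : Finset β) (hC : C.Nonempty)
    (χ : α → α → β) (hχ : ∀ a b, χ a b ∈ C) :
    ∀ (M : ℕ) (s : Finset α), (C.card + 1) ^ M ≤ s.card →
    ∃ (l : List α) (d : α → β), l.length = M ∧ l.Pairwise (· < ·) ∧
      (∀ x ∈ l, x ∈ s) ∧ (∀ x ∈ l, d x ∈ C) ∧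
      l.Pairwise (fun x y => χ x y = d x) := by
  intro M
  induction M with
  | zero =>
    intro s _
    exact ⟨[], fun _ => hC.choose, rfl, .nil, by simp, by simp, .nil⟩
  | succ M ih =>
    intro s hs
    have hc1 : 1 ≤ C.card := hC.card_pos
    have hP : 1 ≤ (C.card + 1) ^ M := Nat.one_le_pow _ _ (by omega)
    have hsne : s.Nonempty := Finset.card_pos.1 (by
      have : 1 ≤ (C.card + 1) ^ (M + 1) := Nat.one_le_pow _ _ (by omega)
      omega)
    set a0 := s.min' hsne with ha0
    have ha0s : a0 ∈ s := s.min'_mem hsne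
    have hcard : (s.erase a0).card = s.card - 1 := Finset.card_erase_of_mem ha0s
    have harith : C.card * ((C.card + 1) ^ M - 1) < (s.erase a0).card := by
      rw [hcard]
      have hpow : (C.card + 1) ^ (M + 1) = (C.card + 1) ^ M * (C.card + 1) := pow_succ _ _
      have key : ∀ c p u : ℕ, 1 ≤ c → 1 ≤ p → p * (c + 1) ≤ u → c * (p - 1) < u - 1 := by
        intro c p u hc hp hu
        obtain ⟨p', rfl⟩ : ∃ p', p = p' + 1 := ⟨p - 1, by omega⟩
        simp only [Nat.add_sub_cancel]
        have h3 : c * p' + 2 ≤ u := by nlinarith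
        omega
      exact key _ _ _ hc1 hP (by omega)
    obtain ⟨b, hbC, hb⟩ := Finset.exists_lt_card_fiber_of_mul_lt_card_of_maps_to
      (fun a _ => hχ a0 a) harith
    set s' := (s.erase a0).filter (fun a => χ a0 a = b) with hs'
    have hs'card : (C.card + 1) ^ M ≤ s'.card := by omega
    obtain ⟨l', d', hlen, hpl, hmem, hdC, hpc⟩ := ih s' hs'card
    have hmem' : ∀ x ∈ l', x ∈ s.erase a0 ∧ χ a0 x = b := by
      intro x hx
      have := hmem x hx
      rw [hs', Finset.mem_filter] at this
      exact this
    have hlt : ∀ x ∈ l', a0 < x := by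
      intro x hx
      obtain ⟨hxe, _⟩ := hmem' x hx
      exact lt_of_le_of_ne (s.min'_le x (Finset.mem_of_mem_erase hxe))
        (Ne.symm (Finset.ne_of_mem_erase hxe))
    have ha0nl : a0 ∉ l' := fun h => lt_irrefl a0 (hlt a0 h)
    refine ⟨a0 :: l', Function.update d' a0 b, by simp [hlen], ?_, ?_, ?_, ?_⟩
    · exact List.pairwise_cons.2 ⟨hlt, hpl⟩
    · intro x hx
      rcases List.mem_cons.1 hx with rfl | hx'
      · exact ha0s
      · exact Finset.mem_of_mem_erase (hmem' x hx').1
    · intro x hx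
      rcases List.mem_cons.1 hx with rfl | hx'
      · simpa using hbC
      · have hxne : x ≠ a0 := by rintro rfl; exact ha0nl hx'
        rw [Function.update_of_ne hxne]
        exact hdC x hx'
    · refine List.pairwise_cons.2 ⟨?_, ?_⟩
      · intro y hy
        rw [Function.update_self]
        exact (hmem' y hy).2
      · refine hpc.imp_of_mem ?_
        intro a b' ha hb' h
        have hane : a ≠ a0 := by rintro rfl; exact ha0nl ha
        rw [Function.update_of_ne hane]
        exact h

lemma ramsey2 (C : Finset β) (hC : C.Nonempty) (n : ℕ)
    (χ : α → α → β) (hχ : ∀ a b, χ a b ∈ C) (s : Finset α)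
    (hs : (C.card + 1) ^ (C.card * (n - 1) + 1) ≤ s.card) :
    ∃ t ⊆ s, t.card = n ∧ ∃ b ∈ C, ∀ x ∈ t, ∀ y ∈ t, x < y → χ x y = b := by
  obtain ⟨l, d, hlen, hpl, hmem, hdC, hpc⟩ := seq2 C hC χ hχ (C.card * (n - 1) + 1) s hs
  have hnd : l.Nodup := hpl.imp (fun h => ne_of_lt h)
  have hFcard : l.toFinset.card = C.card * (n - 1) + 1 := by
    rw [List.toFinset_card_of_nodup hnd, hlen]
  obtain ⟨b, hbC, hb⟩ := Finset.exists_lt_card_fiber_of_mul_lt_card_of_maps_to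
    (f := d) (t := C) (n := n - 1) (fun x hx => hdC x (List.mem_toFinset.1 hx)) (by omega)
  have hfib : n ≤ ((l.toFinset).filter (fun x => d x = b)).card := by omega
  obtain ⟨t, hts, htc⟩ := Finset.exists_subset_card_eq hfib
  have htmem : ∀ x ∈ t, x ∈ l ∧ d x = b := by
    intro x hx
    have := hts hx
    rw [Finset.mem_filter, List.mem_toFinset] at this
    exact this
  refine ⟨t, ?_, htc, b, hbC, ?_⟩
  · intro x hx; exact hmem x (htmem x hx).1
  · intro x hx y hy hxy
    have hsub := pair_sublist hpl (htmem x hx).1 (htmem y hy).1 hxy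
    have := hpc.sublist hsub
    rw [List.pairwise_cons] at this
    rw [this.1 y (by simp), (htmem x hx).2]

/-- Tower function for 3-uniform Ramsey. -/
def N3 (c : ℕ) : ℕ → ℕ
  | 0 => 0
  | M + 1 => (c + 1) ^ (c * (N3 c M - 1) + 1) + 1

lemma seq3 (C : Finset β) (hC : C.Nonempty)
    (χ : α → α → α → β) (hχ : ∀ a b c, χ a b c ∈ C) :
    ∀ (M : ℕ) (s : Finset α), N3 C.card M ≤ s.card →
    ∃ (l : List α) (d : α → β), l.length = M ∧ l.Pairwise (· < ·) ∧
      (∀ x ∈ l, x ∈ s) ∧ (∀ x ∈ l, d x ∈ C) ∧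
      (∀ x y z : α, List.Sublist [x, y, z] l → χ x y z = d x) := by
  intro M
  induction M with
  | zero =>
    intro s _
    refine ⟨[], fun _ => hC.choose, rfl, .nil, by simp, by simp, ?_⟩
    intro x y z h
    exact absurd (h.length_le) (by simp)
  | succ M ih =>
    intro s hs
    have hsne : s.Nonempty := Finset.card_pos.1 (by
      have : 1 ≤ N3 C.card (M + 1) := by rw [N3]; omega
      omega)
    set a0 := s.min' hsne with ha0
    have ha0s : a0 ∈ s := s.min'_mem hsne
    have hcard : (s.erase a0).card = s.card - 1 := Finset.card_erase_of_mem ha0s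
    have herase : (C.card + 1) ^ (C.card * (N3 C.card M - 1) + 1) ≤ (s.erase a0).card := by
      have : N3 C.card (M + 1) = (C.card + 1) ^ (C.card * (N3 C.card M - 1) + 1) + 1 := rfl
      omega
    obtain ⟨t, hts, htc, b, hbC, hb⟩ := ramsey2 C hC (N3 C.card M) (χ a0) (hχ a0) _ herase
    obtain ⟨l', d', hlen, hpl, hmem, hdC, hpc⟩ := ih t (le_of_eq htc.symm)
    have hmemE : ∀ x ∈ l', x ∈ s.erase a0 := fun x hx => hts (hmem x hx)
    have hlt : ∀ x ∈ l', a0 < x := by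
      intro x hx
      have hxe := hmemE x hx
      exact lt_of_le_of_ne (s.min'_le x (Finset.mem_of_mem_erase hxe))
        (Ne.symm (Finset.ne_of_mem_erase hxe))
    have ha0nl : a0 ∉ l' := fun h => lt_irrefl a0 (hlt a0 h)
    refine ⟨a0 :: l', Function.update d' a0 b, by simp [hlen], ?_, ?_, ?_, ?_⟩
    · exact List.pairwise_cons.2 ⟨hlt, hpl⟩
    · intro x hx
      rcases List.mem_cons.1 hx with rfl | hx'
      · exact ha0s
      · exact Finset.mem_of_mem_erase (hmemE x hx')
    · intro x hx
      rcases List.mem_cons.1 hx with rfl | hx'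
      · simpa using hbC
      · have hxne : x ≠ a0 := by rintro rfl; exact ha0nl hx'
        rw [Function.update_of_ne hxne]
        exact hdC x hx'
    · intro x y z h
      cases h with
      | cons _ h' =>
        have hxl : x ∈ l' := h'.subset (by simp)
        have hxne : x ≠ a0 := by rintro rfl; exact ha0nl hxl
        rw [Function.update_of_ne hxne]
        exact hpc x y z h'
      | cons_cons _ h' =>
        rw [Function.update_self]
        have hyl : y ∈ l' := h'.subset (by simp)
        have hzl : z ∈ l' := h'.subset (by simp)
        have hyz : y < z := by
          have := hpl.sublist h'
          rw [List.pairwise_cons] at this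
          exact this.1 z (by simp)
        exact hb y (hmem y hyl) z (hmem z hzl) hyz

lemma ramsey3 (C : Finset β) (hC : C.Nonempty) (n : ℕ)
    (χ : α → α → α → β) (hχ : ∀ a b c, χ a b c ∈ C) (s : Finset α)
    (hs : N3 C.card (C.card * (n - 1) + 1) ≤ s.card) :
    ∃ t ⊆ s, t.card = n ∧ ∃ b ∈ C,
      ∀ x ∈ t, ∀ y ∈ t, ∀ z ∈ t, x < y → y < z → χ x y z = b := by
  obtain ⟨l, d, hlen, hpl, hmem, hdC, hpc⟩ := seq3 C hC χ hχ (C.card * (n - 1) + 1) s hs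
  have hnd : l.Nodup := hpl.imp (fun h => ne_of_lt h)
  have hFcard : l.toFinset.card = C.card * (n - 1) + 1 := by
    rw [List.toFinset_card_of_nodup hnd, hlen]
  obtain ⟨b, hbC, hb⟩ := Finset.exists_lt_card_fiber_of_mul_lt_card_of_maps_to
    (f := d) (t := C) (n := n - 1) (fun x hx => hdC x (List.mem_toFinset.1 hx)) (by omega)
  have hfib : n ≤ ((l.toFinset).filter (fun x => d x = b)).card := by omega
  obtain ⟨t, hts, htc⟩ := Finset.exists_subset_card_eq hfib
  have htmem : ∀ x ∈ t, x ∈ l ∧ d x = b := by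
    intro x hx
    have := hts hx
    rw [Finset.mem_filter, List.mem_toFinset] at this
    exact this
  refine ⟨t, ?_, htc, b, hbC, ?_⟩
  · intro x hx; exact hmem x (htmem x hx).1
  · intro x hx y hy z hz hxy hyz
    have hsub := triple_sublist hpl (htmem x hx).1 (htmem y hy).1 (htmem z hz).1 hxy hyz
    rw [hpc x y z hsub, (htmem x hx).2]

end Ramsey

instance : Fintype XYZ :=
  ⟨{XYZ.x, XYZ.y, XYZ.z}, fun a => by cases a <;> simp⟩

lemma signature3_length {m : ℕ} (S : PathSystem m) (i j l : Fin m)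
    (h1 : S.f i 0 < S.f j 0) (h2 : S.f j 0 < S.f l 0)
    (hij : i ≠ j) (hil : i ≠ l) (hjl : j ≠ l) :
    (signature3 S i j l h1 h2).length =
      (((S.finite_meet i j hij).toFinset ∪ (S.finite_meet i l hil).toFinset) ∪
        (S.finite_meet j l hjl).toFinset).card := by
  unfold signature3
  rw [List.length_map, Finset.length_sort]

lemma meet_card_le {m : ℕ} {S : PathSystem m} {k : ℕ} (hK : KCrossing S k)
    {i j : Fin m} (hij : i ≠ j) : (S.finite_meet i j hij).toFinset.card ≤ k := by
  have h := (hK i j hij).2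
  rwa [Set.ncard_eq_toFinset_card (meetSet S i j) (S.finite_meet i j hij)] at h

lemma meet_card_ge {m : ℕ} {S : PathSystem m} {k : ℕ} (hK : KCrossing S k)
    {i j : Fin m} (hij : i ≠ j) : 1 ≤ (S.finite_meet i j hij).toFinset.card := by
  have h := (hK i j hij).1
  rwa [Set.ncard_eq_toFinset_card (meetSet S i j) (S.finite_meet i j hij)] at h

lemma signature3_length_le {m : ℕ} {S : PathSystem m} {k : ℕ} (hK : KCrossing S k)
    (i j l : Fin m) (h1 : S.f i 0 < S.f j 0) (h2 : S.f j 0 < S.f l 0) :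
    (signature3 S i j l h1 h2).length ≤ 3 * k := by
  have hij : i ≠ j := fun h => by subst h; exact lt_irrefl _ h1
  have hil : i ≠ l := fun h => by subst h; exact lt_irrefl _ (h1.trans h2)
  have hjl : j ≠ l := fun h => by subst h; exact lt_irrefl _ h2
  rw [signature3_length S i j l h1 h2 hij hil hjl]
  have u1 := Finset.card_union_le
    ((S.finite_meet i j hij).toFinset ∪ (S.finite_meet i l hil).toFinset)
    (S.finite_meet j l hjl).toFinset
  have u2 := Finset.card_union_le (S.finite_meet i j hij).toFinset
    (S.finite_meet i l hil).toFinset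
  have a1 := meet_card_le hK hij
  have a2 := meet_card_le hK hil
  have a3 := meet_card_le hK hjl
  omega

lemma signature3_ne_nil {m : ℕ} {S : PathSystem m} {k : ℕ} (hK : KCrossing S k)
    (i j l : Fin m) (h1 : S.f i 0 < S.f j 0) (h2 : S.f j 0 < S.f l 0) :
    signature3 S i j l h1 h2 ≠ [] := by
  have hij : i ≠ j := fun h => by subst h; exact lt_irrefl _ h1
  have hil : i ≠ l := fun h => by subst h; exact lt_irrefl _ (h1.trans h2)
  have hjl : j ≠ l := fun h => by subst h; exact lt_irrefl _ h2
  intro hnil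
  have hlen := signature3_length S i j l h1 h2 hij hil hjl
  rw [hnil] at hlen
  have hsub : (S.finite_meet i j hij).toFinset ⊆
      ((S.finite_meet i j hij).toFinset ∪ (S.finite_meet i l hil).toFinset) ∪
        (S.finite_meet j l hjl).toFinset :=
    (Finset.subset_union_left).trans (Finset.subset_union_left)
  have := (meet_card_ge hK hij).trans (Finset.card_le_card hsub)
  simp only [List.length_nil] at hlen
  omega

/-- **Theorem (existence of large regular subsystems).** For `k ≥ 1` and `n ≥ 4`
there is a positive integer `N` such that every `k`-crossing system of size at least
`N` contains a regular subsystem of size `n` (all size-3 subsystems of the subsystem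
have the same nonempty signature). -/
theorem exists_regular_subsystem (k n : ℕ) (hk : 1 ≤ k) (hn : 4 ≤ n) :
    ∃ N : ℕ, 0 < N ∧ ∀ (m : ℕ) (S : PathSystem m), N ≤ m → KCrossing S k →
      ∃ s : Finset (Fin m), s.card = n ∧
        ∃ σ : List XYZ, σ ≠ [] ∧
          ∀ i j l : Fin m, i ∈ s → j ∈ s → l ∈ s →
            ∀ (h1 : S.f i 0 < S.f j 0) (h2 : S.f j 0 < S.f l 0),
              signature3 S i j l h1 h2 = σ := by
  classical
  have hfin : {l : List XYZ | l.length ≤ 3 * k}.Finite := List.finite_length_le XYZ (3 * k)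
  set C : Finset (List XYZ) := hfin.toFinset with hCdef
  have hCne : C.Nonempty := ⟨[], by simp [hCdef, Set.Finite.mem_toFinset]⟩
  refine ⟨max (N3 C.card (C.card * (n - 1) + 1)) 1, lt_of_lt_of_le one_pos (le_max_right _ _), ?_⟩
  intro m S hm hK
  have hN3 : N3 C.card (C.card * (n - 1) + 1) ≤ m := le_trans (le_max_left _ _) hm
  -- order the paths by their value at 0
  set g : Fin m → ℝ := fun i => S.f i 0 with hgdef
  have hginj : Function.Injective g := by
    intro i j h
    by_contra hne
    exact S.endpoints0 i j hne h
  set e := Tuple.sort g with hedef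
  have hsm : StrictMono (g ∘ e) :=
    (Tuple.monotone_sort g).strictMono_of_injective (hginj.comp e.injective)
  -- the coloring of ordered triples by signatures
  set χ3 : Fin m → Fin m → Fin m → List XYZ := fun a b c =>
    if h : S.f (e a) 0 < S.f (e b) 0 ∧ S.f (e b) 0 < S.f (e c) 0 then
      signature3 S (e a) (e b) (e c) h.1 h.2
    else [] with hχdef
  have hχC : ∀ a b c, χ3 a b c ∈ C := by
    intro a b c
    simp only [hχdef]
    split
    · rename_i h
      rw [hCdef, Set.Finite.mem_toFinset]
      exact signature3_length_le hK _ _ _ h.1 h.2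
    · rw [hCdef, Set.Finite.mem_toFinset]
      simp
  obtain ⟨t0, -, htc, σ, hσC, hhom⟩ :=
    ramsey3 C hCne n χ3 hχC (Finset.univ : Finset (Fin m)) (by simpa using hN3)
  refine ⟨t0.image e, ?_, σ, ?_, ?_⟩
  · rw [Finset.card_image_of_injective t0 e.injective, htc]
  · -- σ is nonempty: evaluate on some triple of t0
    have h3 : 3 ≤ t0.card := by omega
    have hne0 : t0.Nonempty := Finset.card_pos.1 (by omega)
    set a := t0.min' hne0 with hadef
    have hat : a ∈ t0 := t0.min'_mem hne0
    set t1 := t0.erase a with ht1def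
    have ht1c : t1.card = t0.card - 1 := Finset.card_erase_of_mem hat
    have hne1 : t1.Nonempty := Finset.card_pos.1 (by omega)
    set b := t1.min' hne1 with hbdef
    have hbt1 : b ∈ t1 := t1.min'_mem hne1
    have hbt : b ∈ t0 := Finset.mem_of_mem_erase hbt1
    set t2 := t1.erase b with ht2def
    have ht2c : t2.card = t1.card - 1 := Finset.card_erase_of_mem hbt1
    have hne2 : t2.Nonempty := Finset.card_pos.1 (by omega)
    set c := t2.min' hne2 with hcdef
    have hct2 : c ∈ t2 := t2.min'_mem hne2
    have hct1 : c ∈ t1 := Finset.mem_of_mem_erase hct2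
    have hct : c ∈ t0 := Finset.mem_of_mem_erase hct1
    have hab : a < b :=
      lt_of_le_of_ne (t0.min'_le b hbt) (Ne.symm (Finset.ne_of_mem_erase hbt1))
    have hbc : b < c :=
      lt_of_le_of_ne (t1.min'_le c hct1) (Ne.symm (Finset.ne_of_mem_erase hct2))
    have hσ := hhom a hat b hbt c hct hab hbc
    have hg1 : S.f (e a) 0 < S.f (e b) 0 := hsm hab
    have hg2 : S.f (e b) 0 < S.f (e c) 0 := hsm hbc
    simp only [hχdef] at hσ
    rw [dif_pos (And.intro hg1 hg2)] at hσ
    rw [← hσ]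
    exact signature3_ne_nil hK _ _ _ hg1 hg2
  · intro i j l hi hj hl h1 h2
    obtain ⟨a, hat, rfl⟩ := Finset.mem_image.1 hi
    obtain ⟨b, hbt, rfl⟩ := Finset.mem_image.1 hj
    obtain ⟨c, hct, rfl⟩ := Finset.mem_image.1 hl
    have hab : a < b := hsm.lt_iff_lt.1 h1
    have hbc : b < c := hsm.lt_iff_lt.1 h2
    have hσ := hhom a hat b hbt c hct hab hbc
    simp only [hχdef] at hσ
    rw [dif_pos (And.intro h1 h2)] at hσ
    exact hσ

end
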